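/- Suppose 0 < ℓ ≤ r < 1 and ⌈1/r⌉ > 1/ℓ (the pair (ℓ, r) is not in the good region), and set Z* = r·⌊1/r⌋. Then there exists a scheduling policy π with P_max^π ≤ A/Z* + A_max/r; in particular P_max^π ≤ A/Z* + A_max/ℓ, where A = Σ_{i=1}^n A_i and A_max = max_i A_i. -/

import Mathlib

open Finset Set

/-- A scheduling policy for `n` demands with malleability parameters `l ≤ r`:
each demand `i` is supplied without interruption on `[tau i, tau i + s i] ⊆ [0,1]`,
with duration `s i ∈ [l, r]`. -/
structure Policy (l r : ℝ) (n : ℕ) where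
  tau : Fin n → ℝ
  s : Fin n → ℝ
  tau_nonneg : ∀ i, 0 ≤ tau i
  fits : ∀ i, tau i + s i ≤ 1
  s_lb : ∀ i, l ≤ s i
  s_ub : ∀ i, s i ≤ r

/-- The instantaneous power at time `t`: the sum of the consumption rates
`A i / s i` of the demands active at `t` (half-open supply intervals). -/
noncomputable def power {l r : ℝ} {n : ℕ} (A : Fin n → ℝ) (π : Policy l r n) (t : ℝ) : ℝ :=
  ∑ i : Fin n, Set.indicator (Set.Ico (π.tau i) (π.tau i + π.s i)) (fun _ => A i / π.s i) t

/-- The power peak of a policy: the supremum of the instantaneous power over `[0,1)`. -/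
noncomputable def peak {l r : ℝ} {n : ℕ} (A : Fin n → ℝ) (π : Policy l r n) : ℝ :=
  sSup (power A π '' Set.Ico (0 : ℝ) 1)

/-- The optimal power peak: the infimum of the power peaks over all policies. -/
noncomputable def Popt (l r : ℝ) (n : ℕ) (A : Fin n → ℝ) : ℝ :=
  sInf {p : ℝ | ∃ π : Policy l r n, p = peak A π}

lemma aux_downclosed (T : Finset ℕ) (h : ∀ k ∈ T, ∀ k' ≤ k, k' ∈ T) :
    T = Finset.range T.card := by
  apply Finset.Subset.antisymm
  · intro y hy
    rw [Finset.mem_range]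
    by_contra hy'
    push_neg at hy'
    have hsub : Finset.range (y + 1) ⊆ T := by
      intro k hk
      exact h y hy k (Nat.lt_succ_iff.mp (Finset.mem_range.mp hk))
    have := Finset.card_le_card hsub
    simp at this; omega
  · intro x hx
    rw [Finset.mem_range] at hx
    by_contra hxT
    have hsub : T ⊆ Finset.range x := by
      intro y hy
      rw [Finset.mem_range]
      by_contra h'
      exact hxT (h y hy x (by omega))
    have := Finset.card_le_card hsub
    simp at this; omega

lemma aux_slot_sum (n : ℕ) (a : ℕ → ℝ) (ha : ∀ k, 0 ≤ a k) (c Amax : ℝ)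
    (hc : 0 < c) (hAmax0 : 0 ≤ Amax) (hAmax : ∀ k < n, a k ≤ Amax) (j : ℕ) :
    ∑ k ∈ (Finset.range n).filter
        (fun k => ⌊(∑ i ∈ Finset.range k, a i) / c⌋₊ = j), a k ≤ c + Amax := by
  set S : ℕ → ℝ := fun k => ∑ i ∈ Finset.range k, a i with hSdef
  have hS0 : ∀ k, 0 ≤ S k := fun k => Finset.sum_nonneg (fun i _ => ha i)
  have hSm : Monotone S := fun k k' hk => Finset.sum_le_sum_of_subset_of_nonneg
    (Finset.range_subset_range.mpr hk) (fun i _ _ => ha i)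
  set T := (Finset.range n).filter (fun k => ⌊S k / c⌋₊ = j) with hT
  have hmemT : ∀ k ∈ T, (j : ℝ) * c ≤ S k ∧ S k < ((j : ℝ) + 1) * c := by
    intro k hk
    rw [hT, Finset.mem_filter] at hk
    have hfl := hk.2
    rw [Nat.floor_eq_iff (div_nonneg (hS0 k) hc.le)] at hfl
    constructor
    · have := hfl.1
      rw [le_div_iff₀ hc] at this; linarith
    · have := hfl.2
      rw [div_lt_iff₀ hc] at this; push_cast at this; linarith
  by_cases hTe : T = ∅
  · rw [hTe]; simpa using by positivity
  obtain ⟨k₀, hk₀⟩ := Finset.nonempty_iff_ne_empty.mpr hTe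
  set T₁ := (Finset.range n).filter (fun k => S k < (j : ℝ) * c) with hT₁
  set T₂ := (Finset.range n).filter (fun k => S k < ((j : ℝ) + 1) * c) with hT₂
  have hdc₁ : T₁ = Finset.range T₁.card := by
    apply aux_downclosed
    intro k hk k' hk'
    rw [hT₁, Finset.mem_filter] at hk ⊢
    exact ⟨Finset.mem_range.mpr (lt_of_le_of_lt hk' (Finset.mem_range.mp hk.1)),
      lt_of_le_of_lt (hSm hk') hk.2⟩
  have hdc₂ : T₂ = Finset.range T₂.card := by
    apply aux_downclosed
    intro k hk k' hk'
    rw [hT₂, Finset.mem_filter] at hk ⊢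
    exact ⟨Finset.mem_range.mpr (lt_of_le_of_lt hk' (Finset.mem_range.mp hk.1)),
      lt_of_le_of_lt (hSm hk') hk.2⟩
  set K₁ := T₁.card
  set K₂ := T₂.card
  have hK₂n : K₂ ≤ n := le_trans (Finset.card_filter_le _ _) (by simp)
  have hsub12 : T₁ ⊆ T₂ := by
    intro k hk
    rw [hT₁, Finset.mem_filter] at hk
    rw [hT₂, Finset.mem_filter]
    exact ⟨hk.1, lt_of_lt_of_le hk.2 (by nlinarith)⟩
  have hK12 : K₁ ≤ K₂ := Finset.card_le_card hsub12
  -- T ⊆ T₂ \ T₁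
  have hsubT : T ⊆ T₂ \ T₁ := by
    intro k hk
    have hm := hmemT k hk
    rw [hT] at hk
    rw [Finset.mem_sdiff, hT₂, hT₁, Finset.mem_filter, Finset.mem_filter]
    refine ⟨⟨(Finset.mem_filter.mp hk).1, hm.2⟩, fun hc' => ?_⟩
    exact absurd hm.1 (not_le.mpr hc'.2)
  have hsum_le : ∑ k ∈ T, a k ≤ ∑ k ∈ T₂ \ T₁, a k :=
    Finset.sum_le_sum_of_subset_of_nonneg hsubT (fun i _ _ => ha i)
  have hsd : T₂ \ T₁ = Finset.Ico K₁ K₂ := by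
    rw [hdc₂, hdc₁]
    ext x
    simp [Finset.mem_sdiff, Finset.mem_range, Finset.mem_Ico]
    omega
  have hsum_eq : ∑ k ∈ T₂ \ T₁, a k = S K₂ - S K₁ := by
    rw [hsd, Finset.sum_Ico_eq_sub _ hK12]
  -- S K₁ ≥ j * c
  have hK₁lt : K₁ < n := by
    have hk₀T₁ : k₀ ∉ T₁ := by
      rw [hT₁, Finset.mem_filter]
      push_neg
      intro _
      exact (hmemT k₀ hk₀).1
    have hk₀n : k₀ < n := Finset.mem_range.mp (Finset.mem_filter.mp (hT ▸ hk₀)).1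
    have : K₁ ≤ k₀ := by
      by_contra hK
      exact hk₀T₁ (hdc₁ ▸ Finset.mem_range.mpr (not_le.mp hK))
    omega
  have hSK₁ : (j : ℝ) * c ≤ S K₁ := by
    have : K₁ ∉ T₁ := by rw [hdc₁]; simp
    rw [hT₁, Finset.mem_filter] at this
    push_neg at this
    exact this (Finset.mem_range.mpr hK₁lt)
  -- S K₂ ≤ (j+1)*c + Amax
  have hSK₂ : S K₂ ≤ ((j : ℝ) + 1) * c + Amax := by
    rcases Nat.eq_zero_or_pos K₂ with h0 | hpos
    · rw [h0]
      have : S 0 = 0 := by simp [hSdef]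
      rw [this]; positivity
    · obtain ⟨K', hK'⟩ : ∃ K', K₂ = K' + 1 := ⟨K₂ - 1, by omega⟩
      rw [hK']
      have hK'mem : K' ∈ T₂ := hdc₂ ▸ Finset.mem_range.mpr (by omega)
      rw [hT₂, Finset.mem_filter] at hK'mem
      have hstep : S (K' + 1) = S K' + a K' := Finset.sum_range_succ a K'
      have haK' : a K' ≤ Amax := hAmax K' (Finset.mem_range.mp hK'mem.1)
      linarith [hK'mem.2]
  calc ∑ k ∈ T, a k ≤ S K₂ - S K₁ := by rw [← hsum_eq]; exact hsum_le
    _ ≤ c + Amax := by linarith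

theorem non_ideal_case_upper_bound (l r : ℝ) (n : ℕ) (A : Fin n → ℝ)
    (hl : 0 < l) (hlr : l ≤ r) (hr : r < 1) (hn : 1 ≤ n) (hA : ∀ i, 0 < A i)
    (hbad : (⌈(1 : ℝ) / r⌉ : ℝ) > 1 / l) :
    ∃ π : Policy l r n,
      peak A π ≤ (∑ i, A i) / (r * (⌊(1 : ℝ) / r⌋ : ℝ)) + (⨆ i, A i) / r ∧
      peak A π ≤ (∑ i, A i) / (r * (⌊(1 : ℝ) / r⌋ : ℝ)) + (⨆ i, A i) / l := by
  have hr0 : 0 < r := lt_of_lt_of_le hl hlr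
  set m : ℕ := ⌊(1:ℝ)/r⌋₊ with hm
  have h1r : (1:ℝ) ≤ 1/r := by
    rw [le_div_iff₀ hr0]; linarith
  have hm1 : 1 ≤ m := Nat.le_floor (by exact_mod_cast h1r)
  have hmpos : (0:ℝ) < (m:ℝ) := by exact_mod_cast hm1
  have hmr : (m:ℝ) * r ≤ 1 := by
    have h1 : (m:ℝ) ≤ 1/r := Nat.floor_le (by positivity)
    calc (m:ℝ) * r ≤ (1/r) * r := mul_le_mul_of_nonneg_right h1 hr0.le
      _ = 1 := by field_simp
  have hfloor_cast : ((⌊(1:ℝ)/r⌋ : ℤ) : ℝ) = (m : ℝ) := by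
    have h0 : (0:ℤ) ≤ ⌊(1:ℝ)/r⌋ := Int.floor_nonneg.mpr (by positivity)
    have h1 : ((m : ℕ) : ℤ) = ⌊(1:ℝ)/r⌋ := by
      rw [hm, ← Int.floor_toNat]; exact Int.toNat_of_nonneg h0
    exact_mod_cast h1.symm
  set Atot := ∑ i, A i with hAtotdef
  have hAtot : 0 < Atot := Finset.sum_pos (fun i _ => hA i) ⟨⟨0, hn⟩, Finset.mem_univ _⟩
  set Amax := ⨆ i, A i with hAmaxdef
  have hbdd : BddAbove (Set.range A) := Set.Finite.bddAbove (Set.finite_range A)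
  have hAmax_ge : ∀ i, A i ≤ Amax := fun i => le_ciSup hbdd i
  have hAmax0 : 0 < Amax := lt_of_lt_of_le (hA ⟨0, hn⟩) (hAmax_ge _)
  set c := Atot / m with hcdef
  have hc : 0 < c := div_pos hAtot hmpos
  set a : ℕ → ℝ := fun k => if h : k < n then A ⟨k, h⟩ else 0 with hadef
  have ha : ∀ k, 0 ≤ a k := by
    intro k; rw [hadef]; dsimp only; split
    · exact (hA _).le
    · exact le_rfl
  have haA : ∀ i : Fin n, a i.val = A i := by
    intro i; rw [hadef]; dsimp only; rw [dif_pos i.isLt]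
  have haAmax : ∀ k < n, a k ≤ Amax := by
    intro k hk
    have : a k = A ⟨k, hk⟩ := haA ⟨k, hk⟩
    rw [this]; exact hAmax_ge _
  set S : ℕ → ℝ := fun k => ∑ i ∈ Finset.range k, a i with hSdef
  have hSn : S n = Atot := by
    rw [hSdef, hAtotdef]
    dsimp only
    rw [← Fin.sum_univ_eq_sum_range a n]
    exact Finset.sum_congr rfl (fun i _ => haA i)
  have hSm : Monotone S := fun k k' hk => Finset.sum_le_sum_of_subset_of_nonneg
    (Finset.range_subset_range.mpr hk) (fun i _ _ => ha i)
  have hS0 : ∀ k, 0 ≤ S k := fun k => Finset.sum_nonneg (fun i _ => ha i)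
  have hSlt : ∀ k, k < n → S k < Atot := by
    intro k hk
    have h1 : S (k + 1) = S k + a k := Finset.sum_range_succ a k
    have h2 : S (k + 1) ≤ S n := hSm (by omega)
    have h3 : 0 < a k := by rw [haA ⟨k, hk⟩]; exact hA _
    rw [hSn] at h2; linarith
  set slot : ℕ → ℕ := fun k => ⌊S k / c⌋₊ with hslotdef
  have hslot_lt : ∀ k, k < n → slot k < m := by
    intro k hk
    rw [hslotdef]
    dsimp only
    rw [Nat.floor_lt (div_nonneg (hS0 k) hc.le)]
    rw [div_lt_iff₀ hc]
    have : (m:ℝ) * c = Atot := by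
      rw [hcdef]; field_simp
    linarith [hSlt k hk]
  have hfits : ∀ i : Fin n, (slot i.val : ℝ) * r + r ≤ 1 := by
    intro i
    have h1 : slot i.val + 1 ≤ m := hslot_lt i.val i.isLt
    have h2 : ((slot i.val : ℝ) + 1) * r ≤ (m : ℝ) * r := by
      apply mul_le_mul_of_nonneg_right _ hr0.le
      exact_mod_cast h1
    nlinarith
  set π : Policy l r n := ⟨fun i => (slot i.val : ℝ) * r, fun _ => r,
    fun i => by positivity, hfits, fun _ => hlr, fun _ => le_rfl⟩ with hπ
  have hτ : ∀ i : Fin n, π.tau i = (slot i.val : ℝ) * r := fun i => rfl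
  have hs : ∀ i : Fin n, π.s i = r := fun i => rfl
  have hkey : ∀ t ∈ Set.Ico (0:ℝ) 1, power A π t ≤ Atot / (r * (m:ℝ)) + Amax / r := by
    intro t ht
    have ht0 : 0 ≤ t := ht.1
    set j := ⌊t / r⌋₊ with hj
    have hiff : ∀ i : Fin n,
        (t ∈ Set.Ico ((slot i.val : ℝ) * r) ((slot i.val : ℝ) * r + r)) ↔ slot i.val = j := by
      intro i
      rw [Set.mem_Ico]
      constructor
      · rintro ⟨h1, h2⟩
        symm
        rw [hj]
        rw [Nat.floor_eq_iff (div_nonneg ht0 hr0.le)]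
        constructor
        · rw [le_div_iff₀ hr0]; linarith
        · rw [div_lt_iff₀ hr0]; push_cast; linarith
      · intro h
        have hle : (j : ℝ) ≤ t / r := by rw [hj]; exact Nat.floor_le (div_nonneg ht0 hr0.le)
        have hlt : t / r < (j : ℝ) + 1 := by rw [hj]; exact_mod_cast Nat.lt_floor_add_one (t / r)
        rw [le_div_iff₀ hr0] at hle
        rw [div_lt_iff₀ hr0] at hlt
        rw [h]
        constructor
        · linarith
        · nlinarith
    have hpow : power A π t
        = (∑ k ∈ (Finset.range n).filter (fun k => slot k = j), a k) / r := by
      rw [power]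
      have step1 : ∀ i : Fin n,
          Set.indicator (Set.Ico (π.tau i) (π.tau i + π.s i)) (fun _ => A i / π.s i) t
            = (fun k => if slot k = j then a k / r else 0) i.val := by
        intro i
        rw [hτ i, hs i, Set.indicator_apply, if_congr (hiff i) rfl rfl]
        simp only [haA i]
      rw [Finset.sum_congr rfl (fun i _ => step1 i),
        Fin.sum_univ_eq_sum_range (fun k => if slot k = j then a k / r else 0) n,
        ← Finset.sum_filter, ← Finset.sum_div]
    rw [hpow]
    have hfilter : (Finset.range n).filter (fun k => slot k = j)
        = (Finset.range n).filter (fun k => ⌊(∑ i ∈ Finset.range k, a i) / c⌋₊ = j) := by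
      simp only [hslotdef, hSdef]
    have hb := aux_slot_sum n a ha c Amax hc hAmax0.le haAmax j
    rw [hfilter]
    have hdiv : (∑ k ∈ (Finset.range n).filter
        (fun k => ⌊(∑ i ∈ Finset.range k, a i) / c⌋₊ = j), a k) / r ≤ (c + Amax) / r := by
      gcongr
    have heq : (c + Amax) / r = Atot / (r * (m:ℝ)) + Amax / r := by
      rw [hcdef]; field_simp
    linarith
  have hpeak : peak A π ≤ Atot / (r * (m:ℝ)) + Amax / r := by
    apply Real.sSup_le
    · rintro x ⟨t, ht, rfl⟩
      exact hkey t ht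
    · positivity
  refine ⟨π, ?_, ?_⟩
  · rw [hfloor_cast]; exact hpeak
  · rw [hfloor_cast]
    refine le_trans hpeak (add_le_add_right ?_ _)
    gcongr
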